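/- Let φ₀ ≠ 0 be a real constant and let c₁, c₂ be real constants. Define f(θ) = c₁·cos(φ₀·θ) + c₂·sin(φ₀·θ), m₁ ≡ 0, m₃(θ) = f(θ), and m₂(θ) = −m₃'(θ)/φ₀. Then (m₁, m₂, m₃) satisfies the geodesic Darboux system m₁' = m₃ − f, m₂' = φ₀·m₃, m₃' = −m₁ − φ₀·m₂ on ℝ, and the function m₁² + m₂² + m₃² is constant on ℝ (equal to c₁² + c₂²). -/

import Mathlib

/-- Theorem 1 (ii) of the paper: the displayed coefficients solve the geodesic
Darboux system with `m₁ ≡ 0` and give constant breadth `c₁² + c₂²`. -/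
theorem geodesic_case_ii_solution
    (φ₀ : ℝ) (hφ₀ : φ₀ ≠ 0) (c₁ c₂ : ℝ)
    (f m₁ m₂ m₃ : ℝ → ℝ)
    (hf : ∀ θ, f θ = c₁ * Real.cos (φ₀ * θ) + c₂ * Real.sin (φ₀ * θ))
    (hm₁ : ∀ θ, m₁ θ = 0)
    (hm₃ : ∀ θ, m₃ θ = f θ)
    (hm₂ : ∀ θ, m₂ θ = -(deriv m₃ θ) / φ₀) :
    (∀ θ, deriv m₁ θ = m₃ θ - f θ) ∧
    (∀ θ, deriv m₂ θ = φ₀ * m₃ θ) ∧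
    (∀ θ, deriv m₃ θ = -m₁ θ - φ₀ * m₂ θ) ∧
    (∀ θ, (m₁ θ) ^ 2 + (m₂ θ) ^ 2 + (m₃ θ) ^ 2 = c₁ ^ 2 + c₂ ^ 2) := by
  have hm₃f : m₃ = f := funext hm₃
  have hm₁f : m₁ = fun _ => (0 : ℝ) := funext hm₁
  have hlin : ∀ θ : ℝ, HasDerivAt (fun θ : ℝ => φ₀ * θ) φ₀ θ := by
    intro θ
    simpa using (hasDerivAt_id θ).const_mul φ₀
  have hfd : ∀ θ, HasDerivAt f (φ₀ * (c₂ * Real.cos (φ₀ * θ) - c₁ * Real.sin (φ₀ * θ))) θ := by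
    intro θ
    have h := (((hlin θ).cos).const_mul c₁).add (((hlin θ).sin).const_mul c₂)
    have hfF : f = fun θ => c₁ * Real.cos (φ₀ * θ) + c₂ * Real.sin (φ₀ * θ) := funext hf
    rw [hfF]
    refine h.congr_deriv ?_
    ring
  have dm₃ : ∀ θ, deriv m₃ θ = φ₀ * (c₂ * Real.cos (φ₀ * θ) - c₁ * Real.sin (φ₀ * θ)) := by
    intro θ; rw [hm₃f]; exact (hfd θ).deriv
  have hm₂' : ∀ θ, m₂ θ = c₁ * Real.sin (φ₀ * θ) - c₂ * Real.cos (φ₀ * θ) := by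
    intro θ
    rw [hm₂, dm₃]
    field_simp
    ring
  refine ⟨?_, ?_, ?_, ?_⟩
  · intro θ
    rw [hm₁f, hm₃, deriv_const]
    ring
  · intro θ
    have hm₂F : m₂ = fun θ => c₁ * Real.sin (φ₀ * θ) - c₂ * Real.cos (φ₀ * θ) := funext hm₂'
    have h := (((hlin θ).sin).const_mul c₁).sub (((hlin θ).cos).const_mul c₂)
    have hd : deriv m₂ θ = c₁ * (Real.cos (φ₀ * θ) * φ₀) - c₂ * (-Real.sin (φ₀ * θ) * φ₀) := by
      rw [hm₂F]; exact h.deriv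
    rw [hd, hm₃, hf]; ring
  · intro θ
    rw [dm₃, hm₁, hm₂']
    ring
  · intro θ
    rw [hm₁, hm₂', hm₃, hf]
    have := Real.sin_sq_add_cos_sq (φ₀ * θ)
    nlinarith [this]
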